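/- One inclusion of the Rees kernel description: for any commutative ring R, ideals I_j of R[x] with generators f_k, distinguished generators f_{k_j} that are nonzero divisors, and L the ideal generated by the Koszul relations f_{k_j}T_{k,j} − f_kT_{k_j,j}, the saturation L : (∏_j f_{k_j})^∞ is contained in the kernel of the presentation map φ of the multi-Rees algebra. -/

import Mathlib

open MvPolynomial

lemma C_mem_nonZeroDivisors_aux {S : Type*} [CommRing S] {σ : Type*} {p : S}
    (hp : p ∈ nonZeroDivisors S) :
    (MvPolynomial.C p : MvPolynomial σ S) ∈ nonZeroDivisors (MvPolynomial σ S) := by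
  rw [mem_nonZeroDivisors_iff_right] at hp ⊢
  intro g hg
  rw [mul_comm] at hg
  ext m
  have := congrArg (MvPolynomial.coeff m) hg
  rw [MvPolynomial.coeff_C_mul, MvPolynomial.coeff_zero] at this
  simpa using hp _ (by rw [mul_comm] at this; exact this)

/-- One inclusion of the Rees kernel description over any commutative ring: if the
distinguished generators `f_{k_j}` are nonzero divisors and `L` is the ideal generated by
the Koszul relations `f_{k_j}T_{k,j} − f_k T_{k_j,j}`, then
`L : (∏_j f_{k_j})^∞ ⊆ ker φ`: if `(∏_j f_{k_j})^ℓ · h ∈ L` then `φ(h) = 0`. -/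
theorem stmt14 {R : Type*} [CommRing R]
    (n r : ℕ) (κ : Type*) (f : κ → MvPolynomial (Fin n) R)
    (jdx : κ → Fin r) (kj : Fin r → κ) (hkj : ∀ j, jdx (kj j) = j)
    (hnzd : ∀ j, f (kj j) ∈ nonZeroDivisors (MvPolynomial (Fin n) R)) :
    letI φ : MvPolynomial κ (MvPolynomial (Fin n) R) →ₐ[MvPolynomial (Fin n) R]
        MvPolynomial (Fin r) (MvPolynomial (Fin n) R) :=
      aeval (fun k => C (f k) * X (jdx k))
    letI L : Ideal (MvPolynomial κ (MvPolynomial (Fin n) R)) :=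
      Ideal.span (Set.range (fun k =>
        C (f (kj (jdx k))) * X k - C (f k) * X (kj (jdx k))))
    ∀ (h : MvPolynomial κ (MvPolynomial (Fin n) R)) (ℓ : ℕ),
      C ((∏ j : Fin r, f (kj j)) ^ ℓ) * h ∈ L → φ h = 0 := by
  intro h ℓ hmem
  set φ : MvPolynomial κ (MvPolynomial (Fin n) R) →ₐ[MvPolynomial (Fin n) R]
      MvPolynomial (Fin r) (MvPolynomial (Fin n) R) :=
    aeval (fun k => C (f k) * X (jdx k)) with hφ
  set L : Ideal (MvPolynomial κ (MvPolynomial (Fin n) R)) :=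
    Ideal.span (Set.range (fun k =>
      C (f (kj (jdx k))) * X k - C (f k) * X (kj (jdx k)))) with hL
  show φ h = 0
  have hker : L ≤ RingHom.ker (φ : MvPolynomial κ (MvPolynomial (Fin n) R) →+*
      MvPolynomial (Fin r) (MvPolynomial (Fin n) R)) := by
    rw [Ideal.span_le]
    rintro _ ⟨k, rfl⟩
    simp only [SetLike.mem_coe, RingHom.mem_ker, map_sub, map_mul, AlgHom.coe_toRingHom]
    simp [hφ, hkj, mul_comm, mul_left_comm]
  have h0 : φ (C ((∏ j : Fin r, f (kj j)) ^ ℓ) * h) = 0 := hker hmem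
  rw [map_mul] at h0
  have hC : φ (C ((∏ j : Fin r, f (kj j)) ^ ℓ)) =
      C ((∏ j : Fin r, f (kj j)) ^ ℓ) := by
    simp [hφ, algHom_C]
  rw [hC] at h0
  have hp : (∏ j : Fin r, f (kj j)) ^ ℓ ∈ nonZeroDivisors (MvPolynomial (Fin n) R) :=
    pow_mem (prod_mem fun j _ => hnzd j) ℓ
  have := C_mem_nonZeroDivisors_aux (σ := Fin r) hp
  exact (mul_right_mem_nonZeroDivisors_eq_zero_iff this).1 (by rw [mul_comm] at h0; exact h0)
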